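/- Every rational torsion point of the elliptic curve y² + xy + y = x³ + x² over ℚ has x-coordinate 0 or −1, and the rational torsion subgroup is cyclic of order 4. -/

import Mathlib

open WeierstrassCurve Polynomial

/-- The modular curve X₁(15): y² + xy + y = x³ + x² over ℚ. -/
def X115 : WeierstrassCurve.Affine ℚ := ⟨1, 1, 1, 0, 0⟩

open WeierstrassCurve.Affine

@[simp] lemma X115_a₁ : X115.a₁ = 1 := rfl
@[simp] lemma X115_a₂ : X115.a₂ = 1 := rfl
@[simp] lemma X115_a₃ : X115.a₃ = 1 := rfl
@[simp] lemma X115_a₄ : X115.a₄ = 0 := rfl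
@[simp] lemma X115_a₆ : X115.a₆ = 0 := rfl

lemma X115_equation_iff (x y : ℚ) :
    X115.Equation x y ↔ y ^ 2 + x * y + y = x ^ 3 + x ^ 2 := by
  rw [WeierstrassCurve.Affine.equation_iff]
  simp only [X115_a₁, X115_a₂, X115_a₃, X115_a₄, X115_a₆]
  constructor <;> intro h <;> linarith

lemma X115_negY (x y : ℚ) : X115.negY x y = -y - x - 1 := by
  rw [WeierstrassCurve.Affine.negY]; simp

lemma X115_nonsingular (x y : ℚ) (he : y ^ 2 + x * y + y = x ^ 3 + x ^ 2)
    (hne : (y ≠ -y - x - 1) ∨ (y ≠ 3 * x ^ 2 + 2 * x)) : X115.Nonsingular x y := by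
  rw [WeierstrassCurve.Affine.nonsingular_iff]
  refine ⟨(X115_equation_iff x y).mpr he, ?_⟩
  simp only [X115_a₁, X115_a₂, X115_a₃, X115_a₄]
  rcases hne with h | h
  · exact Or.inr (by convert h using 2; ring)
  · exact Or.inl (by intro hc; exact h (by linarith))

lemma h00 : X115.Nonsingular 0 0 :=
  X115_nonsingular 0 0 (by norm_num) (Or.inl (by norm_num))
lemma h0m1 : X115.Nonsingular 0 (-1) :=
  X115_nonsingular 0 (-1) (by norm_num) (Or.inl (by norm_num))
lemma hm10 : X115.Nonsingular (-1) 0 :=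
  X115_nonsingular (-1) 0 (by norm_num) (Or.inr (by norm_num))

lemma some_congr {x₁ y₁ x₂ y₂ : ℚ} (h₁ : X115.Nonsingular x₁ y₁) (h₂ : X115.Nonsingular x₂ y₂)
    (hx : x₁ = x₂) (hy : y₁ = y₂) : Point.some _ _ h₁ = Point.some _ _ h₂ := by
  subst hx; subst hy; rfl

lemma dbl00 : (Point.some _ _ h00 : X115.Point) + Point.some _ _ h00 = Point.some _ _ hm10 := by
  have hy : (0:ℚ) ≠ X115.negY 0 0 := by rw [X115_negY]; norm_num
  rw [Point.add_self_of_Y_ne hy]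
  refine some_congr _ _ ?_ ?_
  · rw [slope_of_Y_ne rfl hy]
    rw [WeierstrassCurve.Affine.addX, X115_negY]
    norm_num
  · rw [slope_of_Y_ne rfl hy]
    rw [WeierstrassCurve.Affine.addY, WeierstrassCurve.Affine.negAddY,
      WeierstrassCurve.Affine.addX, X115_negY]
    rw [X115_negY]
    norm_num

lemma dblm10 : (Point.some _ _ hm10 : X115.Point) + Point.some _ _ hm10 = 0 := by
  have hy : (0:ℚ) = X115.negY (-1) 0 := by rw [X115_negY]; norm_num
  exact Point.add_self_of_Y_eq hy

lemma neg00 : -(Point.some _ _ h00 : X115.Point) = Point.some _ _ h0m1 := by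
  rw [Point.neg_some]
  exact some_congr _ _ rfl (by rw [X115_negY]; norm_num)

lemma four_smul00 : (4 : ℕ) • (Point.some _ _ h00 : X115.Point) = 0 := by
  have h4 : (4 : ℕ) = 2 * 2 := by norm_num
  rw [h4, mul_nsmul]
  simp only [two_nsmul]
  rw [dbl00, dblm10]

lemma fin00 : IsOfFinAddOrder (Point.some _ _ h00 : X115.Point) :=
  isOfFinAddOrder_iff_nsmul_eq_zero.mpr ⟨4, by norm_num, four_smul00⟩

noncomputable def P0T : AddCommGroup.torsion X115.Point :=
  ⟨Point.some _ _ h00, fin00⟩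

noncomputable def phi : ZMod 4 →+ AddCommGroup.torsion X115.Point :=
  ZMod.lift 4 ⟨zmultiplesHom _ P0T, by
    apply Subtype.ext
    show (((4 : ℤ) • P0T : AddCommGroup.torsion X115.Point) : X115.Point) = (0 : X115.Point)
    rw [AddSubgroupClass.coe_zsmul]
    show (4 : ℤ) • (Point.some _ _ h00 : X115.Point) = 0
    rw [show ((4:ℤ)) = ((4:ℕ):ℤ) from rfl, natCast_zsmul]
    exact four_smul00⟩

lemma phi_coe (k : ℤ) : ((phi (k : ZMod 4) : AddCommGroup.torsion X115.Point) : X115.Point)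
    = k • (Point.some _ _ h00 : X115.Point) := by
  rw [phi, ZMod.lift_coe]
  rw [zmultiplesHom_apply, AddSubgroupClass.coe_zsmul]
  rfl

lemma z4smul : (4 : ℤ) • (Point.some _ _ h00 : X115.Point) = 0 := by
  rw [show ((4:ℤ)) = ((4:ℕ):ℤ) from rfl, natCast_zsmul]
  exact four_smul00

lemma z1smul : (1 : ℤ) • (Point.some _ _ h00 : X115.Point) = Point.some _ _ h00 := one_zsmul _

lemma z2smul : (2 : ℤ) • (Point.some _ _ h00 : X115.Point) = Point.some _ _ hm10 := by
  rw [two_zsmul, dbl00]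

lemma z3smul : (3 : ℤ) • (Point.some _ _ h00 : X115.Point) = Point.some _ _ h0m1 := by
  rw [show (3:ℤ) = 4 + (-1) by norm_num, add_zsmul, z4smul, neg_zsmul, z1smul, neg00, zero_add]

lemma phi_inj : Function.Injective phi := by
  rw [injective_iff_map_eq_zero]
  intro a ha
  have hval : ((phi a : AddCommGroup.torsion X115.Point) : X115.Point) = 0 := by
    rw [ha]; rfl
  have hall := (by decide : ∀ b : ZMod 4, b = ((0:ℤ) : ZMod 4) ∨ b = ((1:ℤ) : ZMod 4)
      ∨ b = ((2:ℤ) : ZMod 4) ∨ b = ((3:ℤ) : ZMod 4)) a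
  rcases hall with h | h | h | h <;> subst h
  · rfl
  · rw [phi_coe, z1smul] at hval
    exact absurd hval (Point.some_ne_zero h00)
  · rw [phi_coe, z2smul] at hval
    exact absurd hval (Point.some_ne_zero hm10)
  · rw [phi_coe, z3smul] at hval
    exact absurd hval (Point.some_ne_zero h0m1)

lemma phi_surj
    (hclass : ∀ (x y : ℚ) (h : X115.Nonsingular x y),
      IsOfFinAddOrder (Point.some _ _ h) → x = 0 ∨ x = -1) :
    Function.Surjective phi := by
  rintro ⟨P, hP⟩
  have hfin : IsOfFinAddOrder P := (AddCommGroup.mem_torsion _).mp hP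
  match P, hP, hfin with
  | Point.zero, hP, hfin =>
    exact ⟨0, Subtype.ext (by rw [map_zero]; rfl)⟩
  | @Point.some _ _ _ x y h, hP, hfin =>
    have he : y ^ 2 + x * y + y = x ^ 3 + x ^ 2 := (X115_equation_iff x y).mp h.1
    rcases hclass x y h hfin with hx | hx
    · subst hx
      have hy : y * (y + 1) = 0 := by linear_combination he
      rcases mul_eq_zero.mp hy with hy0 | hy1
      · subst hy0
        exact ⟨((1:ℤ) : ZMod 4), Subtype.ext (by rw [phi_coe, z1smul])⟩
      · have hy' : y = -1 := by linarith
        subst hy'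
        exact ⟨((3:ℤ) : ZMod 4), Subtype.ext (by rw [phi_coe, z3smul])⟩
    · subst hx
      have hy : y ^ 2 = 0 := by linear_combination he
      have hy0 : y = 0 := by
        have := pow_eq_zero_iff (n := 2) (by norm_num) |>.mp hy
        exact this
      subst hy0
      exact ⟨((2:ℤ) : ZMod 4), Subtype.ext (by rw [phi_coe, z2smul])⟩

def Hq (x : ℚ) : ℤ := max |x.num| (x.den : ℤ)

lemma one_le_Hq (x : ℚ) : 1 ≤ Hq x :=
  le_trans (by exact_mod_cast x.pos) (le_max_right _ _)

lemma Hq_neg_one : Hq (-1) = 1 := by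
  have h1 : (-1 : ℚ).num = -1 := rfl
  have h2 : (-1 : ℚ).den = 1 := rfl
  rw [Hq, h1, h2]; decide

lemma quad_pos (x : ℚ) : 0 < 4 * x ^ 2 + x + 1 := by nlinarith [sq_nonneg (8 * x + 1)]

lemma cubic_ne' (x : ℚ) (hx : x ≠ -1) : 4 * x ^ 3 + 5 * x ^ 2 + 2 * x + 1 ≠ 0 := by
  have h1 : 4 * x ^ 3 + 5 * x ^ 2 + 2 * x + 1 = (x + 1) * (4 * x ^ 2 + x + 1) := by ring
  rw [h1]
  exact mul_ne_zero (fun h => hx (by linarith [sub_eq_zero.mpr h])) (ne_of_gt (quad_pos x))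

lemma sq_rel (x y : ℚ) (he : y ^ 2 + x * y + y = x ^ 3 + x ^ 2) :
    (2 * y + x + 1) ^ 2 = 4 * x ^ 3 + 5 * x ^ 2 + 2 * x + 1 := by linear_combination 4 * he

lemma Y_ne (x y : ℚ) (he : y ^ 2 + x * y + y = x ^ 3 + x ^ 2) (hx : x ≠ -1) :
    y ≠ X115.negY x y := by
  rw [X115_negY]
  intro h
  have h2 : 2 * y + x + 1 = 0 := by linarith
  have h3 := sq_rel x y he
  rw [h2] at h3
  exact cubic_ne' x hx (by linarith [h3])

lemma dblX (x y : ℚ) (he : y ^ 2 + x * y + y = x ^ 3 + x ^ 2)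
    (hy : y ≠ X115.negY x y) :
    (4 * x ^ 3 + 5 * x ^ 2 + 2 * x + 1) * X115.addX x x (X115.slope x x y y)
      = x ^ 4 - x ^ 2 - 2 * x - 1 := by
  have hden : y - X115.negY x y ≠ 0 := sub_ne_zero.mpr hy
  rw [X115_negY] at hden
  have hD : 2 * y + x + 1 ≠ 0 := fun h => hden (by linarith)
  rw [slope_of_Y_ne rfl hy, WeierstrassCurve.Affine.addX, X115_negY]
  show (4 * x ^ 3 + 5 * x ^ 2 + 2 * x + 1) *
      (((3 * x ^ 2 + 2 * (1:ℚ) * x + 0 - 1 * y) / (y - (-y - x - 1))) ^ 2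
        + 1 * ((3 * x ^ 2 + 2 * (1:ℚ) * x + 0 - 1 * y) / (y - (-y - x - 1))) - 1 - x - x) = _
  rw [← sq_rel x y he]
  have hyy : y - (-y - x - 1) = 2 * y + x + 1 := by ring
  rw [hyy]
  set N : ℚ := 3 * x ^ 2 + 2 * (1:ℚ) * x + 0 - 1 * y with hN
  set D : ℚ := 2 * y + x + 1 with hDdef
  have key : D ^ 2 * ((N / D) ^ 2 + 1 * (N / D) - 1 - x - x)
      = N ^ 2 + N * D - (1 + 2 * x) * D ^ 2 := by
    field_simp
    ring
  rw [key, hN, hDdef]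
  linear_combination (-8*x - 5) * he

lemma six_le (H : ℤ) (h1 : 1 ≤ H) (hbig : 144 < H ^ 3) : 6 ≤ H := by
  by_contra hc
  push_neg at hc
  have h5 : H ≤ 5 := by omega
  have := pow_le_pow_left₀ (by linarith : (0:ℤ) ≤ H) h5 3
  norm_num at this
  linarith

lemma step_ineq (H H' : ℤ) (h6 : 6 ≤ H) (h1 : H ^ 4 ≤ 144 * H') :
    H + 1 ≤ H' ∧ 144 < H' ^ 3 := by
  have hc : (216:ℤ) ≤ H ^ 3 := by
    have := pow_le_pow_left₀ (by norm_num : (0:ℤ) ≤ 6) h6 3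
    norm_num at this
    linarith
  have hm : 216 * H ≤ H ^ 4 := by
    nlinarith [mul_nonneg (by linarith : (0:ℤ) ≤ H) (by linarith : (0:ℤ) ≤ H ^ 3 - 216)]
  have hg : H + 1 ≤ H' := by linarith
  have h7 : 7 ≤ H' := by linarith
  have h343 : (343:ℤ) ≤ H' ^ 3 := by
    have := pow_le_pow_left₀ (by norm_num : (0:ℤ) ≤ 7) h7 3
    norm_num at this
    linarith
  exact ⟨hg, by linarith⟩

lemma grow (x y : ℚ) (h : X115.Nonsingular x y) (hbig : 144 < Hq x ^ 3)
    (hstep : ∀ x x' : ℚ, x ≠ -1 →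
      (4 * x ^ 3 + 5 * x ^ 2 + 2 * x + 1) * x' = x ^ 4 - x ^ 2 - 2 * x - 1 →
      Hq x ^ 4 ≤ 144 * Hq x') :
    ∃ (x' y' : ℚ) (h' : X115.Nonsingular x' y'),
      Point.some _ _ h + Point.some _ _ h = Point.some _ _ h' ∧ 144 < Hq x' ^ 3 ∧ Hq x + 1 ≤ Hq x' := by
  have hx : x ≠ -1 := by
    intro hc
    rw [hc, Hq_neg_one] at hbig
    norm_num at hbig
  have he : y ^ 2 + x * y + y = x ^ 3 + x ^ 2 := (X115_equation_iff x y).mp h.1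
  have hy : y ≠ X115.negY x y := Y_ne x y he hx
  have h1 := hstep x _ hx (dblX x y he hy)
  have h6 : 6 ≤ Hq x := six_le _ (one_le_Hq x) hbig
  obtain ⟨hg, hb⟩ := step_ineq (Hq x) (Hq (X115.addX x x (X115.slope x x y y))) h6 h1
  exact ⟨_, _, _, Point.add_self_of_Y_ne hy, hb, hg⟩

lemma iterGrow (hstep : ∀ x x' : ℚ, x ≠ -1 →
      (4 * x ^ 3 + 5 * x ^ 2 + 2 * x + 1) * x' = x ^ 4 - x ^ 2 - 2 * x - 1 →
      Hq x ^ 4 ≤ 144 * Hq x') :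
    ∀ (N : ℕ) (x y : ℚ) (h : X115.Nonsingular x y), 144 < Hq x ^ 3 →
    ∃ (x' y' : ℚ) (h' : X115.Nonsingular x' y'),
      (2 ^ N : ℕ) • (Point.some _ _ h) = Point.some _ _ h' ∧ 144 < Hq x' ^ 3
        ∧ Hq x + (N : ℤ) ≤ Hq x' := by
  intro N
  induction N with
  | zero =>
    intro x y h hbig
    refine ⟨x, y, h, ?_, hbig, by norm_num⟩
    rw [pow_zero, one_nsmul]
  | succ n ih =>
    intro x y h hbig
    obtain ⟨x1, y1, h1, he1, hb1, hg1⟩ := ih x y h hbig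
    obtain ⟨x2, y2, h2, he2, hb2, hg2⟩ := grow x1 y1 h1 hb1 hstep
    refine ⟨x2, y2, h2, ?_, hb2, ?_⟩
    · have hp : (2 ^ (n + 1) : ℕ) = 2 ^ n + 2 ^ n := by rw [pow_succ]; omega
      rw [hp, add_nsmul, he1, he2]
    · push_cast
      push_cast at hg1
      linarith

lemma pigeon (P : X115.Point) (hfin : IsOfFinAddOrder P) :
    ∃ k l : ℕ, k < l ∧ (2 ^ l : ℕ) • P = (2 ^ k : ℕ) • P := by
  set m := addOrderOf P with hm
  have hm0 : 0 < m := hfin.addOrderOf_pos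
  haveI : NeZero m := ⟨hm0.ne'⟩
  obtain ⟨k, l, hne, heq⟩ :=
    Finite.exists_ne_map_eq_of_infinite (f := fun k : ℕ => ((2 ^ k : ℕ) : ZMod m))
  have key : ∀ k l : ℕ, k < l → ((2 ^ k : ℕ) : ZMod m) = ((2 ^ l : ℕ) : ZMod m) →
      (2 ^ l : ℕ) • P = (2 ^ k : ℕ) • P := by
    intro k l hkl hcast
    have hmod : (2 ^ k : ℕ) ≡ 2 ^ l [MOD m] := (ZMod.natCast_eq_natCast_iff _ _ _).mp hcast
    have hle : (2 ^ k : ℕ) ≤ 2 ^ l := Nat.pow_le_pow_right (by norm_num) hkl.le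
    have hdvd : m ∣ 2 ^ l - 2 ^ k := (Nat.modEq_iff_dvd' hle).mp hmod
    have hz : (2 ^ l - 2 ^ k : ℕ) • P = 0 := by
      rw [← hm] at *
      exact (addOrderOf_dvd_iff_nsmul_eq_zero).mp hdvd
    calc (2 ^ l : ℕ) • P = ((2 ^ k) + (2 ^ l - 2 ^ k) : ℕ) • P := by
          rw [Nat.add_sub_cancel' hle]
      _ = (2 ^ k : ℕ) • P + (2 ^ l - 2 ^ k : ℕ) • P := add_nsmul P _ _
      _ = (2 ^ k : ℕ) • P := by rw [hz, add_zero]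
  rcases lt_or_gt_of_ne hne with hkl | hkl
  · exact ⟨k, l, hkl, key k l hkl heq⟩
  · exact ⟨l, k, hkl, key l k hkl heq.symm⟩

lemma torsion_small (hstep : ∀ x x' : ℚ, x ≠ -1 →
      (4 * x ^ 3 + 5 * x ^ 2 + 2 * x + 1) * x' = x ^ 4 - x ^ 2 - 2 * x - 1 →
      Hq x ^ 4 ≤ 144 * Hq x')
    (x y : ℚ) (h : X115.Nonsingular x y) (hfin : IsOfFinAddOrder (Point.some _ _ h)) :
    Hq x ^ 3 ≤ 144 := by
  by_contra hbig
  push_neg at hbig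
  obtain ⟨k, l, hkl, heq⟩ := pigeon (Point.some _ _ h) hfin
  obtain ⟨x1, y1, h1, he1, hb1, _⟩ := iterGrow hstep k x y h hbig
  obtain ⟨x2, y2, h2, he2, _, hg2⟩ := iterGrow hstep (l - k) x1 y1 h1 hb1
  have hl : (2 ^ l : ℕ) • (Point.some _ _ h : X115.Point) = Point.some _ _ h2 := by
    have hmul : (2 ^ l : ℕ) = 2 ^ k * 2 ^ (l - k) := by
      rw [← pow_add]
      congr 1
      omega
    rw [hmul, mul_nsmul, he1, he2]
  have hx12 : Point.some _ _ h2 = Point.some _ _ h1 := by rw [← hl, heq, he1]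
  have hxx : x2 = x1 := by
    cases hx12
    rfl
  rw [hxx] at hg2
  have : (1 : ℤ) ≤ ((l - k : ℕ) : ℤ) := by
    have : 1 ≤ l - k := by omega
    exact_mod_cast this
  linarith

def sqIn (n : ℕ) : Bool := (List.range 88).any fun k => k * k == n

set_option maxHeartbeats 2000000 in
lemma check55 : ∀ a ∈ Finset.Icc (-5:ℤ) 5, ∀ b ∈ Finset.Icc (1:ℤ) 5,
    a ≠ 0 → a + b ≠ 0 →
    (b * (4*a^3 + 5*a^2*b + 2*a*b^2 + b^3) < 0 ∨
      ((b * (4*a^3 + 5*a^2*b + 2*a*b^2 + b^3)).toNat < 7744 ∧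
        sqIn (b * (4*a^3 + 5*a^2*b + 2*a*b^2 + b^3)).toNat = false)) := by decide

lemma no_small_square (a b t : ℤ) (ha : a ∈ Finset.Icc (-5:ℤ) 5) (hb : b ∈ Finset.Icc (1:ℤ) 5)
    (ha0 : a ≠ 0) (hab : a + b ≠ 0)
    (ht : t * t = b * (4*a^3 + 5*a^2*b + 2*a*b^2 + b^3)) : False := by
  set s : ℤ := b * (4*a^3 + 5*a^2*b + 2*a*b^2 + b^3) with hs
  have hs0 : 0 ≤ s := ht ▸ mul_self_nonneg t
  rcases check55 a ha b hb ha0 hab with h | ⟨hlt, hfalse⟩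
  · omega
  · have htn : t.natAbs * t.natAbs = s.toNat := by
      have h1 : ((t.natAbs * t.natAbs : ℕ) : ℤ) = t * t := Int.natAbs_mul_self
      have h2 : ((s.toNat : ℕ) : ℤ) = s := Int.toNat_of_nonneg hs0
      exact_mod_cast h1.trans (ht.trans h2.symm)
    have hlt88 : t.natAbs < 88 := by
      by_contra hge
      push_neg at hge
      have : 88 * 88 ≤ t.natAbs * t.natAbs := Nat.mul_le_mul hge hge
      omega
    have : sqIn s.toNat = true := by
      rw [sqIn, List.any_eq_true]
      exact ⟨t.natAbs, List.mem_range.mpr hlt88, by simpa using htn⟩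
    rw [hfalse] at this
    exact Bool.false_ne_true this

lemma rat_sq_int (q : ℚ) (s : ℤ) (h : q ^ 2 = (s : ℚ)) : ∃ t : ℤ, (t : ℚ) = q := by
  have hden : q.den ^ 2 = 1 := by
    have h1 : (q ^ 2).den = q.den ^ 2 := Rat.den_pow q 2
    have h2 : ((s : ℚ)).den = 1 := Rat.den_intCast s
    rw [← h1, h, h2]
  have hd1 : q.den = 1 := by nlinarith [q.pos]
  exact ⟨q.num, by rw [← Rat.num_div_den q, hd1]; norm_num⟩

lemma torsion_x (hstep : ∀ x x' : ℚ, x ≠ -1 →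
      (4 * x ^ 3 + 5 * x ^ 2 + 2 * x + 1) * x' = x ^ 4 - x ^ 2 - 2 * x - 1 →
      Hq x ^ 4 ≤ 144 * Hq x')
    (x y : ℚ) (h : X115.Nonsingular x y) (hfin : IsOfFinAddOrder (Point.some _ _ h)) :
    x = 0 ∨ x = -1 := by
  by_contra hcon
  push_neg at hcon
  obtain ⟨hx0, hxm1⟩ := hcon
  have hsmall : Hq x ^ 3 ≤ 144 := torsion_small hstep x y h hfin
  have h5 : Hq x ≤ 5 := by
    by_contra hc
    push_neg at hc
    have h6 : 6 ≤ Hq x := by omega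
    have := pow_le_pow_left₀ (by norm_num : (0:ℤ) ≤ 6) h6 3
    norm_num at this
    linarith
  set a : ℤ := x.num with ha
  set b : ℤ := (x.den : ℤ) with hb
  have hb0 : (0 : ℤ) < b := by rw [hb]; exact_mod_cast x.pos
  have haabs : |a| ≤ 5 := le_trans (le_max_left _ _) h5
  have hbabs : b ≤ 5 := le_trans (le_max_right _ _) h5
  have hbQ : (b : ℚ) ≠ 0 := by
    intro hcast
    have : b = 0 := by exact_mod_cast hcast
    omega
  have hxa : x * (b : ℚ) = (a : ℚ) := by
    rw [ha, hb]
    push_cast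
    rw [mul_comm]
    exact_mod_cast Rat.den_mul_eq_num x
  have he : y ^ 2 + x * y + y = x ^ 3 + x ^ 2 := (X115_equation_iff x y).mp h.1
  set s : ℤ := b * (4*a^3 + 5*a^2*b + 2*a*b^2 + b^3) with hs
  set q : ℚ := ((b : ℚ)) ^ 2 * (2 * y + x + 1) with hq
  have hq2 : q ^ 2 = (s : ℚ) := by
    rw [hq, hs]
    push_cast
    rw [← hxa]
    have h3 := sq_rel x y he
    linear_combination ((b:ℚ))^4 * h3
  obtain ⟨t, htq⟩ := rat_sq_int q s hq2
  have hts : t * t = s := by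
    have : (t:ℚ) * (t:ℚ) = (s:ℚ) := by rw [htq]; linear_combination hq2
    exact_mod_cast this
  have ha0 : a ≠ 0 := by
    rw [ha]
    exact Rat.num_ne_zero.mpr hx0
  have hab : a + b ≠ 0 := by
    intro hc
    apply hxm1
    have hac : (a : ℚ) = -(b:ℚ) := by
      have : a = -b := by omega
      exact_mod_cast this
    have hx1 : x = (a:ℚ) / (b:ℚ) := by rw [eq_div_iff hbQ]; exact hxa
    rw [hx1, hac]
    field_simp
  obtain ⟨hal, har⟩ := abs_le.mp haabs
  exact no_small_square a b t (Finset.mem_Icc.mpr ⟨by omega, by omega⟩)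
    (Finset.mem_Icc.mpr ⟨by omega, by omega⟩) ha0 hab hts

lemma quadBound (c1 c2 c3 a b M : ℤ) (ha : |a| ≤ M) (hb : |b| ≤ M) :
    |c1 * a ^ 2 + c2 * a * b + c3 * b ^ 2| ≤ (|c1| + |c2| + |c3|) * M ^ 2 := by
  have hM : 0 ≤ M := le_trans (abs_nonneg a) ha
  have h1 : |c1 * a ^ 2| ≤ |c1| * M ^ 2 := by
    rw [abs_mul, abs_pow]
    exact mul_le_mul_of_nonneg_left (pow_le_pow_left₀ (abs_nonneg a) ha 2) (abs_nonneg c1)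
  have h2 : |c2 * a * b| ≤ |c2| * M ^ 2 := by
    rw [abs_mul, abs_mul]
    have : |a| * |b| ≤ M * M := mul_le_mul ha hb (abs_nonneg b) hM
    calc |c2| * |a| * |b| = |c2| * (|a| * |b|) := by ring
      _ ≤ |c2| * (M * M) := mul_le_mul_of_nonneg_left this (abs_nonneg c2)
      _ = |c2| * M ^ 2 := by ring
  have h3 : |c3 * b ^ 2| ≤ |c3| * M ^ 2 := by
    rw [abs_mul, abs_pow]
    exact mul_le_mul_of_nonneg_left (pow_le_pow_left₀ (abs_nonneg b) hb 2) (abs_nonneg c3)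
  calc |c1 * a ^ 2 + c2 * a * b + c3 * b ^ 2|
      ≤ |c1 * a ^ 2 + c2 * a * b| + |c3 * b ^ 2| := abs_add_le _ _
    _ ≤ |c1 * a ^ 2| + |c2 * a * b| + |c3 * b ^ 2| :=
        add_le_add (abs_add_le _ _) le_rfl
    _ ≤ |c1| * M ^ 2 + |c2| * M ^ 2 + |c3| * M ^ 2 := by linarith
    _ = (|c1| + |c2| + |c3|) * M ^ 2 := by ring

lemma heightStep (x x' : ℚ) (hx : x ≠ -1)
    (hrel : (4 * x ^ 3 + 5 * x ^ 2 + 2 * x + 1) * x' = x ^ 4 - x ^ 2 - 2 * x - 1) :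
    Hq x ^ 4 ≤ 144 * Hq x' := by
  unfold Hq
  set a : ℤ := x.num with ha
  set b : ℤ := (x.den : ℤ) with hb
  have hb0 : (0 : ℤ) < b := by rw [hb]; exact_mod_cast x.pos
  have hcop : IsCoprime a b := by
    rw [Int.isCoprime_iff_gcd_eq_one]
    exact x.reduced
  set A : ℤ := a ^ 4 - a ^ 2 * b ^ 2 - 2 * a * b ^ 3 - b ^ 4 with hA
  set B : ℤ := 4 * a ^ 3 * b + 5 * a ^ 2 * b ^ 2 + 2 * a * b ^ 3 + b ^ 4 with hB
  have hbQ : (b : ℚ) ≠ 0 := by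
    have : (0:ℤ) ≠ b := hb0.ne
    exact_mod_cast this.symm ∘ fun h => by exact_mod_cast h
  have hxa : x * (b : ℚ) = (a : ℚ) := by
    rw [ha, hb]
    push_cast
    rw [mul_comm]
    exact_mod_cast Rat.den_mul_eq_num x
  have hcub : (4 * x ^ 3 + 5 * x ^ 2 + 2 * x + 1) ≠ 0 := cubic_ne' x hx
  have hAc : (A : ℚ) = (b : ℚ) ^ 4 * (x ^ 4 - x ^ 2 - 2 * x - 1) := by
    rw [hA]; push_cast; rw [← hxa]; ring
  have hBc : (B : ℚ) = (b : ℚ) ^ 4 * (4 * x ^ 3 + 5 * x ^ 2 + 2 * x + 1) := by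
    rw [hB]; push_cast; rw [← hxa]; ring
  have hBne : (B : ℚ) ≠ 0 := by rw [hBc]; exact mul_ne_zero (pow_ne_zero _ hbQ) hcub
  have hBZ : B ≠ 0 := fun h => hBne (by rw [h]; exact Int.cast_zero)
  have hx' : x' = (A : ℚ) / (B : ℚ) := by
    rw [eq_div_iff hBne, hAc, hBc]
    linear_combination (b:ℚ)^4 * hrel
  set n : ℤ := x'.num with hn
  set d : ℤ := (x'.den : ℤ) with hd
  have hd0 : (0 : ℤ) < d := by rw [hd]; exact_mod_cast x'.pos
  have hdQ : (d : ℚ) ≠ 0 := by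
    intro h
    rw [show ((d:ℤ):ℚ) = ((x'.den : ℤ) : ℚ) from by rw [hd]] at h
    have : (x'.den : ℚ) = 0 := by exact_mod_cast h
    exact (Nat.cast_ne_zero.mpr x'.den_nz) this
  have hcop' : IsCoprime d n := by
    rw [Int.isCoprime_iff_gcd_eq_one, Int.gcd_comm]
    exact x'.reduced
  have hcross : A * d = n * B := by
    have h1 : (n : ℚ) / (d : ℚ) = (A : ℚ) / (B : ℚ) := by
      rw [← hx', hn, hd]
      exact_mod_cast Rat.num_div_den x'
    have h2 := (div_eq_div_iff hdQ hBne).mp h1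
    have h3 : (A : ℚ) * (d : ℚ) = (n : ℚ) * (B : ℚ) := by linear_combination -h2
    exact_mod_cast h3
  have hdB : d ∣ B := hcop'.dvd_of_dvd_mul_left ⟨A, by linarith [hcross]⟩
  obtain ⟨g, hg⟩ := hdB
  have hgn : A = g * n := by
    have h2 : A * d = (g * n) * d := by rw [hcross, hg]; ring
    exact mul_right_cancel₀ hd0.ne' h2
  have hgB : B = g * d := by rw [hg]; ring
  -- identities
  have hid1 : b * (48 * a ^ 2 + 40 * a * b + 7 * b ^ 2) * A
      + (-12 * a ^ 3 + 5 * a ^ 2 * b + 10 * a * b ^ 2 + 22 * b ^ 3) * B = 15 * b ^ 7 := by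
    rw [hA, hB]; ring
  have hid2 : a * (-15 * a ^ 2 - 4 * a * b - 4 * b ^ 2) * A
      + a * (a ^ 2 - 4 * a * b - 4 * b ^ 2) * B = -(15 * a ^ 7) := by
    rw [hA, hB]; ring
  have hdvd1 : g ∣ 15 * b ^ 7 := by
    have h4 := hid1
    rw [hgn, hgB] at h4
    exact ⟨b * (48 * a ^ 2 + 40 * a * b + 7 * b ^ 2) * n
      + (-12 * a ^ 3 + 5 * a ^ 2 * b + 10 * a * b ^ 2 + 22 * b ^ 3) * d,
      by linear_combination -h4⟩
  have hdvd2 : g ∣ 15 * a ^ 7 := by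
    have h4 := hid2
    rw [hgn, hgB] at h4
    exact ⟨-(a * (-15 * a ^ 2 - 4 * a * b - 4 * b ^ 2) * n
      + a * (a ^ 2 - 4 * a * b - 4 * b ^ 2) * d), by linear_combination h4⟩
  have hg15 : g ∣ 15 := by
    obtain ⟨u, v, huv⟩ := (hcop.pow (n := 7) (m := 7))
    have h5 : (15 : ℤ) = u * (15 * a ^ 7) + v * (15 * b ^ 7) := by linear_combination 15 * huv.symm
    rw [h5]
    exact dvd_add (Dvd.dvd.mul_left hdvd2 u) (Dvd.dvd.mul_left hdvd1 v)
  have hgne : g ≠ 0 := fun h => hBZ (by rw [hgB, h, zero_mul])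
  have habsg : |g| ≤ 15 := Int.le_of_dvd (by norm_num) ((abs_dvd g 15).mpr hg15)
  set H : ℤ := max |a| b with hH
  set H' : ℤ := max |n| d with hH'
  have hH'1 : (1:ℤ) ≤ H' := le_trans hd0 (le_max_right _ _)
  have hAbd : |A| ≤ 15 * H' := by
    rw [hgn, abs_mul]
    exact mul_le_mul habsg (le_max_left _ _) (abs_nonneg n) (by norm_num)
  have hBbd : |B| ≤ 15 * H' := by
    rw [hgB, abs_mul]
    have h1 : |d| ≤ H' := by rw [abs_of_pos hd0]; exact le_max_right _ _
    exact mul_le_mul habsg h1 (abs_nonneg d) (by norm_num)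
  have haH : |a| ≤ H := le_max_left _ _
  have hbH : b ≤ H := le_max_right _ _
  have hbHabs : |b| ≤ H := by rw [abs_of_pos hb0]; exact hbH
  have hH0 : (0:ℤ) < H := lt_of_lt_of_le hb0 hbH
  -- main bound
  have hmain : 15 * H ^ 7 ≤ 2160 * (H ^ 3 * H') := by
    have hq1 : |48 * a ^ 2 + 40 * a * b + 7 * b ^ 2| ≤ 95 * H ^ 2 := by
      have := quadBound 48 40 7 a b H haH hbHabs
      simpa using this
    have hq2 : |(-12) * a ^ 2 + 5 * a * b + 10 * b ^ 2| ≤ 27 * H ^ 2 := by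
      have := quadBound (-12) 5 10 a b H haH hbHabs
      simpa using this
    have hq3 : |(-15) * a ^ 2 - 4 * a * b - 4 * b ^ 2| ≤ 23 * H ^ 2 := by
      have := quadBound (-15) (-4) (-4) a b H haH hbHabs
      simpa [sub_eq_add_neg] using this
    have hq4 : |a ^ 2 - 4 * a * b - 4 * b ^ 2| ≤ 9 * H ^ 2 := by
      have := quadBound 1 (-4) (-4) a b H haH hbHabs
      simpa [sub_eq_add_neg] using this
    rcases le_total (|a|) b with hab | hab
    · -- H = b
      have hHb : H = b := max_eq_right hab
      have hu2 : |(-12 * a ^ 3 + 5 * a ^ 2 * b + 10 * a * b ^ 2 + 22 * b ^ 3)| ≤ 49 * H ^ 3 := by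
        have hrw : -12 * a ^ 3 + 5 * a ^ 2 * b + 10 * a * b ^ 2 + 22 * b ^ 3
            = a * ((-12) * a ^ 2 + 5 * a * b + 10 * b ^ 2) + 22 * b ^ 3 := by ring
        rw [hrw]
        have h6 : |a * ((-12) * a ^ 2 + 5 * a * b + 10 * b ^ 2)| ≤ H * (27 * H ^ 2) := by
          rw [abs_mul]
          exact mul_le_mul haH hq2 (abs_nonneg _) hH0.le
        have h7 : |22 * b ^ 3| ≤ 22 * H ^ 3 := by
          rw [abs_mul, abs_pow]
          have : |b| ^ 3 ≤ H ^ 3 := pow_le_pow_left₀ (abs_nonneg b) hbHabs 3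
          calc |(22:ℤ)| * |b| ^ 3 = 22 * |b| ^ 3 := by norm_num
            _ ≤ 22 * H ^ 3 := by linarith
        calc |a * ((-12) * a ^ 2 + 5 * a * b + 10 * b ^ 2) + 22 * b ^ 3|
            ≤ |a * ((-12) * a ^ 2 + 5 * a * b + 10 * b ^ 2)| + |22 * b ^ 3| := abs_add_le _ _
          _ ≤ H * (27 * H ^ 2) + 22 * H ^ 3 := add_le_add h6 h7
          _ = 49 * H ^ 3 := by ring
      have hu1 : |b * (48 * a ^ 2 + 40 * a * b + 7 * b ^ 2)| ≤ 95 * H ^ 3 := by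
        rw [abs_mul]
        calc |b| * |48 * a ^ 2 + 40 * a * b + 7 * b ^ 2| ≤ H * (95 * H ^ 2) :=
            mul_le_mul hbHabs hq1 (abs_nonneg _) hH0.le
          _ = 95 * H ^ 3 := by ring
      have hstep : (15 : ℤ) * H ^ 7 ≤ 95 * H ^ 3 * (15 * H') + 49 * H ^ 3 * (15 * H') := by
        calc (15:ℤ) * H ^ 7
            = |15 * b ^ 7| := by rw [hHb, abs_of_pos (by positivity)]
          _ = |b * (48 * a ^ 2 + 40 * a * b + 7 * b ^ 2) * A
              + (-12 * a ^ 3 + 5 * a ^ 2 * b + 10 * a * b ^ 2 + 22 * b ^ 3) * B| := by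
              rw [hid1]
          _ ≤ |b * (48 * a ^ 2 + 40 * a * b + 7 * b ^ 2)| * |A|
              + |(-12 * a ^ 3 + 5 * a ^ 2 * b + 10 * a * b ^ 2 + 22 * b ^ 3)| * |B| := by
              rw [← abs_mul, ← abs_mul]
              exact abs_add_le _ _
          _ ≤ 95 * H ^ 3 * (15 * H') + 49 * H ^ 3 * (15 * H') :=
              add_le_add (mul_le_mul hu1 hAbd (abs_nonneg _) (by positivity))
                (mul_le_mul hu2 hBbd (abs_nonneg _) (by positivity))
      have h9 : 95 * H ^ 3 * (15 * H') + 49 * H ^ 3 * (15 * H') = 2160 * (H ^ 3 * H') := by ring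
      rw [h9] at hstep
      linarith
    · -- H = |a|
      have hHa : H = |a| := max_eq_left hab
      have hu1 : |a * (-15 * a ^ 2 - 4 * a * b - 4 * b ^ 2)| ≤ 23 * H ^ 3 := by
        rw [abs_mul]
        calc |a| * |(-15) * a ^ 2 - 4 * a * b - 4 * b ^ 2| ≤ H * (23 * H ^ 2) :=
            mul_le_mul haH hq3 (abs_nonneg _) hH0.le
          _ = 23 * H ^ 3 := by ring
      have hu2 : |a * (a ^ 2 - 4 * a * b - 4 * b ^ 2)| ≤ 9 * H ^ 3 := by
        rw [abs_mul]
        calc |a| * |a ^ 2 - 4 * a * b - 4 * b ^ 2| ≤ H * (9 * H ^ 2) :=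
            mul_le_mul haH hq4 (abs_nonneg _) hH0.le
          _ = 9 * H ^ 3 := by ring
      have hstep : (15 : ℤ) * H ^ 7 ≤ 23 * H ^ 3 * (15 * H') + 9 * H ^ 3 * (15 * H') := by
        calc (15:ℤ) * H ^ 7 = |(-(15 : ℤ)) * a ^ 7| := by
              rw [abs_mul, abs_neg, abs_pow, hHa]; norm_num
          _ = |a * (-15 * a ^ 2 - 4 * a * b - 4 * b ^ 2) * A
              + a * (a ^ 2 - 4 * a * b - 4 * b ^ 2) * B| := by
              rw [hid2]; congr 1; ring
          _ ≤ |a * (-15 * a ^ 2 - 4 * a * b - 4 * b ^ 2)| * |A|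
              + |a * (a ^ 2 - 4 * a * b - 4 * b ^ 2)| * |B| := by
              rw [← abs_mul, ← abs_mul]
              exact abs_add_le _ _
          _ ≤ 23 * H ^ 3 * (15 * H') + 9 * H ^ 3 * (15 * H') :=
              add_le_add (mul_le_mul hu1 hAbd (abs_nonneg _) (by positivity))
                (mul_le_mul hu2 hBbd (abs_nonneg _) (by positivity))
      have h9 : 23 * H ^ 3 * (15 * H') + 9 * H ^ 3 * (15 * H') = 480 * (H ^ 3 * H') := by ring
      rw [h9] at hstep
      have hpos : 0 ≤ H ^ 3 * H' := by positivity
      linarith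
  have hfin : H ^ 3 * (15 * H ^ 4) ≤ H ^ 3 * (15 * (144 * H')) := by nlinarith [hmain]
  have h8 := le_of_mul_le_mul_left hfin (by positivity : (0:ℤ) < H ^ 3)
  linarith


/-- Every rational torsion point of X₁(15) has x-coordinate 0 or −1, and the
rational torsion subgroup is cyclic of order 4. -/
theorem stmt_14 :
    (∀ (x y : ℚ) (h : X115.Nonsingular x y),
      IsOfFinAddOrder (WeierstrassCurve.Affine.Point.some x y h) → x = 0 ∨ x = -1) ∧
    Nonempty (AddCommGroup.torsion X115.Point ≃+ ZMod 4) := by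
  refine ⟨torsion_x heightStep, ?_⟩
  exact ⟨(AddEquiv.ofBijective phi ⟨phi_inj, phi_surj (torsion_x heightStep)⟩).symm⟩
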